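/- Let R ⊆ S_n be the top-l partial ranking determined by distinct items a_1,…,a_l, and let σ, τ ∈ R. Then the Kendall distance satisfies d(σ, τ) = C(n−l, 2) − d(A_R(σ), τ). -/

import Mathlib

/-- The Kendall (tau) distance between two permutations of `Fin n`:
the number of pairs `(x, y)` with `x < y` on which `σ⁻¹` and `τ⁻¹`
disagree in relative order. -/
def kendallDist {n : ℕ} (σ τ : Equiv.Perm (Fin n)) : ℕ :=
  (Finset.univ.filter (fun p : Fin n × Fin n =>
    p.1 < p.2 ∧ ¬((σ⁻¹ p.1 < σ⁻¹ p.2) ↔ (τ⁻¹ p.1 < τ⁻¹ p.2)))).card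

/-- The top-`k` partial ranking determined by the items `a 0, …, a (k-1)`:
the set of full rankings (permutations) `σ` with `σ i = a i` for the first
`k` positions. -/
def topkFinset {n k : ℕ} (hk : k ≤ n) (a : Fin k → Fin n) :
    Finset (Equiv.Perm (Fin n)) :=
  Finset.univ.filter fun σ => ∀ i : Fin k, σ (Fin.castLE hk i) = a i

/-- The permutation of `Fin n` fixing the first `k` positions and reversing
the order of the remaining `n - k` positions. -/
def revAfter (n k : ℕ) : Equiv.Perm (Fin n) :=
  Function.Involutive.toPerm
    (fun p => if _h : (p : ℕ) < k then p
      else ⟨n + k - 1 - (p : ℕ), by have := p.isLt; omega⟩)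
    (by
      intro p
      have hp := p.isLt
      by_cases h : (p : ℕ) < k
      · simp [h]
      · have h2 : ¬ (n + k - 1 - (p : ℕ) < k) := by omega
        simp only [dif_neg h, dif_neg h2]
        ext
        simp
        omega)

/-- The antithetic permutation of `σ` relative to a top-`k` partial ranking:
the first `k` positions are unchanged and the remaining positions are
reversed, i.e. `A σ (k+j) = σ (n+1-j)` (in 1-indexed notation). -/
def antithetic (n k : ℕ) (σ : Equiv.Perm (Fin n)) : Equiv.Perm (Fin n) :=
  σ * revAfter n k

lemma revAfter_apply_lt {n k : ℕ} (p : Fin n) (h : (p : ℕ) < k) :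
    revAfter n k p = p := by
  exact dif_pos h

lemma revAfter_apply_ge {n k : ℕ} (p : Fin n) (h : k ≤ (p : ℕ)) :
    (revAfter n k p : ℕ) = n + k - 1 - (p : ℕ) := by
  have e : revAfter n k p = ⟨n + k - 1 - (p : ℕ), by have := p.isLt; omega⟩ :=
    dif_neg (by omega)
  rw [e]

lemma revAfter_inv (n k : ℕ) : (revAfter n k)⁻¹ = revAfter n k := rfl

lemma card_filter_le_val (n l : ℕ) :
    (Finset.univ.filter fun p : Fin n => l ≤ (p : ℕ)).card = n - l := by
  have := Finset.card_bij' (s := Finset.univ.filter fun p : Fin n => l ≤ (p : ℕ))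
    (t := Finset.range (n - l))
    (fun p _ => (p : ℕ) - l)
    (fun m hm => (⟨m + l, by simp only [Finset.mem_range] at hm; omega⟩ : Fin n))
    (by intro p hp; simp only [Finset.mem_filter] at hp; have := p.isLt
        simp only [Finset.mem_range]; omega)
    (by intro m hm; simp only [Finset.mem_range] at hm
        simp only [Finset.mem_filter, Finset.mem_univ, true_and]; omega)
    (by intro p hp; simp only [Finset.mem_filter] at hp; ext; simp; omega)
    (by intro m hm; simp only [Finset.mem_range] at hm; simp)
  rw [this, Finset.card_range]

lemma card_lt_pairs {α : Type*} [LinearOrder α] [DecidableEq α] (T : Finset α) :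
    ((T ×ˢ T).filter fun p => p.1 < p.2).card = T.card.choose 2 := by
  set D := (T ×ˢ T).filter fun p => p.1 < p.2 with hD
  set D' := (T ×ˢ T).filter fun p => p.2 < p.1 with hD'
  have hcard : D.card = D'.card := by
    apply Finset.card_nbij' (fun p => (p.2, p.1)) (fun p => (p.2, p.1)) <;>
      simp +contextual [hD, hD', Finset.mem_product, and_comm, Set.MapsTo, Set.LeftInvOn,
        Set.RightInvOn]
  have hdisj : Disjoint D D' := by
    rw [Finset.disjoint_filter]
    intro p _ h1 h2
    exact absurd h2 (not_lt.2 h1.le)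
  have hunion : D ∪ D' = T.offDiag := by
    ext p
    simp only [hD, hD', Finset.mem_union, Finset.mem_filter, Finset.mem_product,
      Finset.mem_offDiag]
    constructor
    · rintro (⟨⟨h1, h2⟩, h⟩ | ⟨⟨h1, h2⟩, h⟩)
      exacts [⟨h1, h2, h.ne⟩, ⟨h1, h2, h.ne'⟩]
    · rintro ⟨h1, h2, h⟩
      rcases lt_or_gt_of_ne h with h' | h'
      · exact Or.inl ⟨⟨h1, h2⟩, h'⟩
      · exact Or.inr ⟨⟨h1, h2⟩, h'⟩
  have h2 : D.card + D'.card = T.card * T.card - T.card := by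
    rw [← Finset.card_union_of_disjoint hdisj, hunion, Finset.offDiag_card]
  rw [Nat.choose_two_right]
  have hkey : 2 * D.card = T.card * (T.card - 1) := by
    have : T.card * (T.card - 1) = T.card * T.card - T.card := by
      cases T.card
      · simp
      · simp [Nat.mul_sub, Nat.succ_sub_one]; ring_nf; omega
    omega
  omega

/-- For a top-`l` partial ranking `R` determined by distinct items
`a 0, …, a (l-1)` and `σ, τ ∈ R`, the Kendall distance satisfies
`d(σ, τ) = C(n−l, 2) − d(A_R(σ), τ)`. -/
theorem kendallDist_antithetic_topk {n l : ℕ} (hl : l ≤ n)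
    (a : Fin l → Fin n) (ha : Function.Injective a)
    (σ τ : Equiv.Perm (Fin n))
    (hσ : σ ∈ topkFinset hl a) (hτ : τ ∈ topkFinset hl a) :
    (kendallDist σ τ : ℤ) =
      ((n - l).choose 2 : ℤ) - (kendallDist (antithetic n l σ) τ : ℤ) := by
  classical
  simp only [topkFinset, Finset.mem_filter, Finset.mem_univ, true_and] at hσ hτ
  -- the two inverses agree on items ranked in the top `l`
  have inv_eq : ∀ (π ρ : Equiv.Perm (Fin n)),
      (∀ i, π (Fin.castLE hl i) = a i) → (∀ i, ρ (Fin.castLE hl i) = a i) →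
      ∀ x : Fin n, ((π⁻¹ x : ℕ) < l) → ρ⁻¹ x = π⁻¹ x := by
    intro π ρ hπ hρ x h
    have h1 : Fin.castLE hl ⟨(π⁻¹ x : ℕ), h⟩ = π⁻¹ x := by ext; rfl
    have h2 : ρ (Fin.castLE hl ⟨(π⁻¹ x : ℕ), h⟩) = x := by
      rw [hρ, ← hπ ⟨(π⁻¹ x : ℕ), h⟩, h1, Equiv.Perm.coe_inv, Equiv.apply_symm_apply]
    have h3 : ρ⁻¹ x = Fin.castLE hl ⟨(π⁻¹ x : ℕ), h⟩ := by
      apply ρ.injective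
      rw [Equiv.Perm.coe_inv, Equiv.apply_symm_apply]
      exact h2.symm
    rw [h3, h1]
  have hfg := inv_eq σ τ hσ hτ
  have hgf := inv_eq τ σ hτ hσ
  -- pointwise numeric facts
  have Hfact : ∀ x : Fin n,
      ((σ⁻¹ x : ℕ) < l ∧ (τ⁻¹ x : ℕ) = (σ⁻¹ x : ℕ) ∧
        ((revAfter n l (σ⁻¹ x) : ℕ)) = (σ⁻¹ x : ℕ)) ∨
      (l ≤ (σ⁻¹ x : ℕ) ∧ l ≤ (τ⁻¹ x : ℕ) ∧
        ((revAfter n l (σ⁻¹ x) : ℕ)) = n + l - 1 - (σ⁻¹ x : ℕ)) := by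
    intro x
    rcases lt_or_ge (σ⁻¹ x : ℕ) l with h | h
    · exact Or.inl ⟨h, by rw [hfg x h], by rw [revAfter_apply_lt _ h]⟩
    · refine Or.inr ⟨h, ?_, revAfter_apply_ge _ h⟩
      by_contra h'
      push_neg at h'
      have hv : (σ⁻¹ x : ℕ) = (τ⁻¹ x : ℕ) := congrArg Fin.val (hgf x h')
      omega
  have Hinjσ : ∀ x y : Fin n, ((σ⁻¹ x : ℕ) = (σ⁻¹ y : ℕ)) ↔ (x : ℕ) = (y : ℕ) := by
    intro x y
    rw [Fin.val_eq_val, Fin.val_eq_val, EmbeddingLike.apply_eq_iff_eq]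
  have Hinjτ : ∀ x y : Fin n, ((τ⁻¹ x : ℕ) = (τ⁻¹ y : ℕ)) ↔ (x : ℕ) = (y : ℕ) := by
    intro x y
    rw [Fin.val_eq_val, Fin.val_eq_val, EmbeddingLike.apply_eq_iff_eq]
  -- the three finsets
  set F1 := Finset.univ.filter (fun p : Fin n × Fin n =>
    p.1 < p.2 ∧ ¬((σ⁻¹ p.1 < σ⁻¹ p.2) ↔ (τ⁻¹ p.1 < τ⁻¹ p.2))) with hF1
  set F2 := Finset.univ.filter (fun p : Fin n × Fin n =>
    p.1 < p.2 ∧ ¬((revAfter n l (σ⁻¹ p.1) < revAfter n l (σ⁻¹ p.2)) ↔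
      (τ⁻¹ p.1 < τ⁻¹ p.2))) with hF2
  set S := Finset.univ.filter (fun p : Fin n × Fin n =>
    p.1 < p.2 ∧ l ≤ (σ⁻¹ p.1 : ℕ) ∧ l ≤ (σ⁻¹ p.2 : ℕ)) with hS
  have hk1 : kendallDist σ τ = F1.card := rfl
  have hk2 : kendallDist (antithetic n l σ) τ = F2.card := by
    have hAinv : (antithetic n l σ)⁻¹ = revAfter n l * σ⁻¹ := by
      rw [antithetic, mul_inv_rev, revAfter_inv]
    simp only [kendallDist, hAinv, Equiv.Perm.mul_apply, hF2]
  have hsub : F1 ⊆ S := by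
    intro p hp
    simp only [hF1, Finset.mem_filter, Finset.mem_univ, true_and, Fin.lt_def] at hp
    simp only [hS, Finset.mem_filter, Finset.mem_univ, true_and, Fin.lt_def]
    have h1 := Hfact p.1
    have h2 := Hfact p.2
    omega
  have hcompl : F2 = S \ F1 := by
    ext p
    simp only [hF1, hF2, hS, Finset.mem_sdiff, Finset.mem_filter, Finset.mem_univ,
      true_and, Fin.lt_def]
    have h1 := Hfact p.1
    have h2 := Hfact p.2
    have h3 := Hinjσ p.1 p.2
    have h4 := Hinjτ p.1 p.2
    have h5 := (σ⁻¹ p.1).isLt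
    have h6 := (σ⁻¹ p.2).isLt
    omega
  have hsum : kendallDist σ τ + kendallDist (antithetic n l σ) τ = S.card := by
    rw [hk1, hk2, hcompl, Finset.card_sdiff_of_subset hsub]
    have := Finset.card_le_card hsub
    omega
  -- compute S.card
  have hScard : S.card = (n - l).choose 2 := by
    set T := Finset.univ.filter (fun x : Fin n => l ≤ (σ⁻¹ x : ℕ)) with hT
    have hTS : S = (T ×ˢ T).filter fun p => p.1 < p.2 := by
      ext p
      simp only [hS, hT, Finset.mem_filter, Finset.mem_univ, true_and,
        Finset.mem_product]
      tauto
    have hTcard : T.card = n - l := by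
      have himg : T = Finset.image σ (Finset.univ.filter fun p : Fin n => l ≤ (p : ℕ)) := by
        ext x
        simp only [hT, Finset.mem_filter, Finset.mem_univ, true_and, Finset.mem_image]
        constructor
        · intro h
          exact ⟨σ⁻¹ x, h, Equiv.apply_symm_apply σ x⟩
        · rintro ⟨p, hp, rfl⟩
          rwa [Equiv.Perm.coe_inv, Equiv.symm_apply_apply]
      rw [himg, Finset.card_image_of_injective _ σ.injective, card_filter_le_val]
    rw [hTS, card_lt_pairs, hTcard]
  rw [hScard] at hsum
  omega
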